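/- Let ℓ ≥ 2, let x ∈ {0,1}^n, and let R' and R'' be two distinct vectors in D(Tr(x)). Let i and j be, respectively, the first and last indices at which R' and R'' disagree, and define the two candidate vectors R̂ = (R'_1,...,R'_{i−1}, R''_i, R'_i,...,R'_{n+ℓ−2}) (insert R''_i before position i of R') and R̃ = (R'_1,...,R'_j, R''_j, R'_{j+1},...,R'_{n+ℓ−2}) (insert R''_j after position j of R'). Then exactly one of R̂, R̃ is the ℓ-read vector of some binary vector of length n, and that candidate equals Tr(x). -/

import Mathlib

/-- The ℓ-read vector of a binary vector `x` (as a list of Booleans): its entry at 0-based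
index `i` (1-indexed `i+1`) is the Hamming weight of the window of `ℓ` consecutive
coordinates of `x` ending at 1-indexed position `i+1`, with out-of-range coordinates taken
to be `0` (`false`). -/
def readVec (ℓ : ℕ) (x : List Bool) : List ℕ :=
  (List.range (x.length + ℓ - 1)).map fun i =>
    (((List.replicate (ℓ - 1) false ++ x ++ List.replicate (ℓ - 1) false).drop i).take ℓ).count true

/-- The single-deletion ball: all vectors obtained from `u` by deleting exactly one symbol. -/
def delBall {α : Type*} (u : List α) : Set (List α) :=
  { v | ∃ i < u.length, v = u.eraseIdx i }

namespace Recon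

/-- Prefix count of `true`s among the first `t` coordinates (clamped), as an integer. -/
def pc (x : List Bool) (t : ℤ) : ℤ := ((x.take t.toNat).count true : ℤ)

/-- The read-vector as a total function on `ℤ`. -/
def rv (ℓ : ℕ) (x : List Bool) (k : ℤ) : ℤ := pc x (k + 1) - pc x (k + 1 - ℓ)

lemma pc_nonpos (x : List Bool) {t : ℤ} (ht : t ≤ 0) : pc x t = 0 := by
  unfold pc
  have h : t.toNat = 0 := by omega
  simp [h]

lemma pc_of_ge (x : List Bool) {t : ℤ} (ht : (x.length : ℤ) ≤ t) :
    pc x t = (x.count true : ℤ) := by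
  unfold pc
  rw [List.take_of_length_le]
  have : (x.length : ℤ) ≤ (t.toNat : ℤ) := le_trans ht (Int.self_le_toNat t)
  exact_mod_cast this

lemma pc_step (x : List Bool) (t : ℤ) :
    0 ≤ pc x (t + 1) - pc x t ∧ pc x (t + 1) - pc x t ≤ 1 := by
  rcases le_or_gt (t + 1) 0 with h | h
  · rw [pc_nonpos x h, pc_nonpos x (by omega)]; norm_num
  · have h1 : (t + 1).toNat = t.toNat + 1 := by omega
    unfold pc
    rw [h1, List.take_succ, List.count_append]
    rcases h2 : x[t.toNat]? with _ | b
    · simp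
    · cases b <;> simp

lemma pc_step' (x : List Bool) (u v : ℤ) (h : u = v + 1) :
    0 ≤ pc x u - pc x v ∧ pc x u - pc x v ≤ 1 := by
  subst h; exact pc_step x v

lemma rv_def' (x : List Bool) (ℓ : ℕ) (k u v : ℤ) (hu : u = k + 1) (hv : v = k + 1 - ℓ) :
    rv ℓ x k = pc x u - pc x v := by
  subst hu hv; rfl

lemma rv_neg (ℓ : ℕ) (x : List Bool) {k : ℤ} (hk : k < 0) : rv ℓ x k = 0 := by
  unfold rv
  rw [pc_nonpos x (by omega), pc_nonpos x (by omega)]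
  ring

lemma rv_ge (ℓ : ℕ) (x : List Bool) {k : ℤ} (hk : (x.length : ℤ) + ℓ - 1 ≤ k) : rv ℓ x k = 0 := by
  unfold rv
  rw [pc_of_ge x (by omega), pc_of_ge x (by omega)]
  ring

lemma length_readVec (ℓ : ℕ) (x : List Bool) :
    (readVec ℓ x).length = x.length + ℓ - 1 := by
  simp [readVec]

lemma count_take_pad (ℓ : ℕ) (x : List Bool) (s : ℕ) :
    ((List.replicate (ℓ - 1) false ++ x ++ List.replicate (ℓ - 1) false).take s).count true
      = (x.take (s - (ℓ - 1))).count true := by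
  rw [List.take_append, List.count_append,
    List.take_append, List.count_append]
  simp [List.take_replicate, List.count_replicate]

lemma getD_of_lt (l : List ℕ) {k : ℕ} (h : k < l.length) : l.getD k 0 = l[k] := by
  simp [List.getD_eq_getElem?_getD, List.getElem?_eq_getElem h]

lemma getD_of_ge (l : List ℕ) {k : ℕ} (h : l.length ≤ k) : l.getD k 0 = 0 := by
  simp [List.getD_eq_getElem?_getD, List.getElem?_eq_none h]

lemma readVec_getD (ℓ : ℕ) (hl : 1 ≤ ℓ) (x : List Bool) (k : ℕ) :
    (((readVec ℓ x).getD k 0 : ℕ) : ℤ) = rv ℓ x k := by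
  by_cases hk : k < x.length + ℓ - 1
  · have hk' : k < (readVec ℓ x).length := by rw [length_readVec]; exact hk
    rw [getD_of_lt _ hk']
    have hval : (readVec ℓ x)[k] =
        (((List.replicate (ℓ - 1) false ++ x ++ List.replicate (ℓ - 1) false).drop k).take
          ℓ).count true := by
      simp [readVec]
    rw [hval]
    have hsplit :
        ((List.replicate (ℓ - 1) false ++ x ++ List.replicate (ℓ - 1) false).take (k + ℓ)).count
            true
          = ((List.replicate (ℓ - 1) false ++ x ++ List.replicate (ℓ - 1) false).take k).count
              true +
            (((List.replicate (ℓ - 1) false ++ x ++ List.replicate (ℓ - 1) false).drop k).take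
              ℓ).count true := by
      rw [List.take_add, List.count_append]
    have h2 := count_take_pad ℓ x (k + ℓ)
    have h3 := count_take_pad ℓ x k
    have e1 : k + ℓ - (ℓ - 1) = k + 1 := by omega
    rw [e1] at h2
    have e2 : ((k : ℤ) + 1).toNat = k + 1 := by omega
    have e3 : ((k : ℤ) + 1 - (ℓ : ℤ)).toNat = k - (ℓ - 1) := by omega
    unfold rv pc
    rw [e2, e3]
    omega
  · have hk2 : (readVec ℓ x).length ≤ k := by rw [length_readVec]; omega
    rw [getD_of_ge _ hk2, rv_ge ℓ x (by omega)]
    simp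

lemma eq_of_getD (L M : List ℕ) (hlen : L.length = M.length)
    (h : ∀ k, L.getD k 0 = M.getD k 0) : L = M := by
  apply List.ext_getElem hlen
  intro k h1 h2
  have hk := h k
  rwa [getD_of_lt _ h1, getD_of_lt _ h2] at hk

lemma getD_eraseIdx (l : List ℕ) (p k : ℕ) :
    (l.eraseIdx p).getD k 0 = if k < p then l.getD k 0 else l.getD (k + 1) 0 := by
  simp only [List.getD_eq_getElem?_getD, List.getElem?_eraseIdx]
  split <;> rfl

lemma insertIdx_eq_take_cons_drop {α : Type*} (l : List α) (p : ℕ) (v : α) (hp : p ≤ l.length) :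
    l.insertIdx p v = l.take p ++ v :: l.drop p := by
  induction l generalizing p with
  | nil =>
    have : p = 0 := by simpa using hp
    subst this
    simp [List.insertIdx_zero]
  | cons hd tl ih =>
    cases p with
    | zero => simp [List.insertIdx_zero]
    | succ p =>
      simp only [List.insertIdx_succ_cons, List.take_succ_cons, List.drop_succ_cons,
        List.cons_append, List.cons.injEq, true_and]
      exact ih p (by simpa using hp)

lemma getD_insertIdx (l : List ℕ) (p v : ℕ) (hp : p ≤ l.length) (k : ℕ) :
    (l.insertIdx p v).getD k 0 =
      if k < p then l.getD k 0 else if k = p then v else l.getD (k - 1) 0 := by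
  rw [insertIdx_eq_take_cons_drop l p v hp]
  simp only [List.getD_eq_getElem?_getD]
  have hlt : (l.take p).length = p := by simp [List.length_take]; omega
  rcases lt_trichotomy k p with h | h | h
  · rw [List.getElem?_append_left (by omega), List.getElem?_take]
    simp [h]
  · subst h
    rw [List.getElem?_append_right (by omega)]
    have : k - (l.take k).length = 0 := by omega
    rw [this]
    simp
  · rw [List.getElem?_append_right (by omega)]
    have h1 : k - (l.take p).length = (k - p - 1) + 1 := by omega
    rw [h1, List.getElem?_cons_succ, List.getElem?_drop]
    have h2 : p + (k - p - 1) = k - 1 := by omega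
    rw [h2]
    rw [if_neg (by omega), if_neg (by omega)]

/-- Key impossibility lemma (right-pinned version). -/
lemma lemB (ℓ : ℕ) (hℓ : 2 ≤ ℓ) (x z : List Bool) (hlen : z.length = x.length) (b : ℤ)
    (h2 : rv ℓ z (b - 1) = rv ℓ x b) (h4 : rv ℓ z b = rv ℓ x (b - 1))
    (h5 : rv ℓ x (b - 1) ≠ rv ℓ x b)
    (h3 : ∀ k : ℤ, b < k → rv ℓ z k = rv ℓ x k) : False := by
  have hstep : ∀ t : ℤ, b + 2 - ℓ ≤ t →
      pc z t - pc x t = pc z (t + ℓ) - pc x (t + ℓ) := by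
    intro t ht
    have h := h3 (t + ℓ - 1) (by omega)
    rw [rv_def' z ℓ _ (t + ℓ) t (by ring) (by ring),
      rv_def' x ℓ _ (t + ℓ) t (by ring) (by ring)] at h
    omega
  have key : ∀ s : ℕ, ∀ t : ℤ, b + 2 - ℓ ≤ t → (x.length : ℤ) ≤ t + s →
      pc z t - pc x t = (z.count true : ℤ) - (x.count true : ℤ) := by
    intro s
    induction s with
    | zero =>
      intro t ht hts
      rw [pc_of_ge z (by rw [hlen]; simpa using hts), pc_of_ge x (by simpa using hts)]
    | succ s ih =>
      intro t ht hts
      by_cases hbig : (x.length : ℤ) ≤ t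
      · rw [pc_of_ge z (by rw [hlen]; exact hbig), pc_of_ge x hbig]
      · rw [hstep t ht]
        exact ih (t + ℓ) (by omega) (by push_cast at hts ⊢; omega)
  have hW : pc z b - pc x b = pc z (b + 1) - pc x (b + 1) := by
    have w1 := key ((x.length : ℤ) - b).toNat b (by omega)
      (by have := Int.self_le_toNat ((x.length : ℤ) - b); omega)
    have w2 := key ((x.length : ℤ) - b).toNat (b + 1) (by omega)
      (by have := Int.self_le_toNat ((x.length : ℤ) - b); omega)
    rw [w1, w2]
  rw [rv_def' z ℓ _ b (b - ℓ) (by ring) (by ring), rv_def' x ℓ _ (b + 1) (b + 1 - ℓ) rfl rfl] at h2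
  rw [rv_def' z ℓ _ (b + 1) (b + 1 - ℓ) rfl rfl, rv_def' x ℓ _ b (b - ℓ) (by ring) (by ring)] at h4
  rw [rv_def' x ℓ _ b (b - ℓ) (by ring) (by ring), rv_def' x ℓ _ (b + 1) (b + 1 - ℓ) rfl rfl] at h5
  have s1 := pc_step' x (b + 1) b (by ring)
  have s2 := pc_step' x (b + 1 - ℓ) (b - ℓ) (by ring)
  have s3 := pc_step' z (b + 1 - ℓ) (b - ℓ) (by ring)
  omega

/-- Key impossibility lemma (left-pinned version). -/
lemma lemB' (ℓ : ℕ) (hℓ : 2 ≤ ℓ) (x z : List Bool) (a : ℤ)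
    (h2 : rv ℓ z (a + 1) = rv ℓ x a) (h4 : rv ℓ z a = rv ℓ x (a + 1))
    (h5 : rv ℓ x a ≠ rv ℓ x (a + 1))
    (h1 : ∀ k : ℤ, k < a → rv ℓ z k = rv ℓ x k) : False := by
  have hstep : ∀ t : ℤ, t ≤ a → pc z t - pc x t = pc z (t - ℓ) - pc x (t - ℓ) := by
    intro t ht
    have h := h1 (t - 1) (by omega)
    rw [rv_def' z ℓ _ t (t - ℓ) (by ring) (by ring),
      rv_def' x ℓ _ t (t - ℓ) (by ring) (by ring)] at h
    omega
  have key : ∀ s : ℕ, ∀ t : ℤ, t ≤ a → t ≤ (s : ℤ) → pc z t = pc x t := by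
    intro s
    induction s with
    | zero =>
      intro t _ h0
      rw [pc_nonpos z h0, pc_nonpos x h0]
    | succ s ih =>
      intro t ht hts
      by_cases h0 : t ≤ 0
      · rw [pc_nonpos z h0, pc_nonpos x h0]
      · have e := hstep t ht
        have e2 := ih (t - ℓ) (by omega) (by push_cast at hts ⊢; omega)
        omega
  have hz : ∀ t : ℤ, t ≤ a → pc z t = pc x t := fun t ht =>
    key t.toNat t ht (Int.self_le_toNat t)
  rw [rv_def' z ℓ _ (a + 2) (a + 2 - ℓ) (by ring) (by ring),
    rv_def' x ℓ _ (a + 1) (a + 1 - ℓ) rfl rfl] at h2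
  rw [rv_def' z ℓ _ (a + 1) (a + 1 - ℓ) rfl rfl,
    rv_def' x ℓ _ (a + 2) (a + 2 - ℓ) (by ring) (by ring)] at h4
  rw [rv_def' x ℓ _ (a + 1) (a + 1 - ℓ) rfl rfl,
    rv_def' x ℓ _ (a + 2) (a + 2 - ℓ) (by ring) (by ring)] at h5
  have z1 := hz (a + 1 - ℓ) (by omega)
  have z2 := hz (a + 2 - ℓ) (by omega)
  have s1 := pc_step' x (a + 2) (a + 1) (by ring)
  have s2 := pc_step' x (a + 2 - ℓ) (a + 1 - ℓ) (by ring)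
  have s3 := pc_step' z (a + 2) (a + 1) (by ring)
  omega

end Recon

/-- Let `ℓ ≥ 2`, `x ∈ {0,1}ⁿ`, and let `R'` and `R''` be two distinct
vectors in `D(Tr(x))`. Let `i` and `j` be, respectively, the first and last indices at
which `R'` and `R''` disagree (0-indexed), and define the two candidates
`R̂ = (R'_1,…,R'_{i−1}, R''_i, R'_i,…)` (insert `R''_i` before position `i` of `R'`) and
`R̃ = (R'_1,…,R'_j, R''_j, R'_{j+1},…)` (insert `R''_j` after position `j` of `R'`).
Then exactly one of `R̂, R̃` is the `ℓ`-read vector of some binary vector of length `n`,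
and that candidate equals `Tr(x)`. -/
theorem reconstruction_from_two_reads (ℓ n : ℕ) (hℓ : 2 ≤ ℓ) (x : List Bool)
    (hx : x.length = n) (R R' : List ℕ) (hne : R ≠ R')
    (hR : R ∈ delBall (readVec ℓ x)) (hR' : R' ∈ delBall (readVec ℓ x))
    (i j : ℕ)
    (hi : R.getD i 0 ≠ R'.getD i 0 ∧ ∀ k < i, R.getD k 0 = R'.getD k 0)
    (hj : R.getD j 0 ≠ R'.getD j 0 ∧ ∀ k, j < k → R.getD k 0 = R'.getD k 0) :
    ((∃ z : List Bool, z.length = n ∧ R.insertIdx i (R'.getD i 0) = readVec ℓ z) ∧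
      ¬ (∃ z : List Bool, z.length = n ∧ R.insertIdx (j + 1) (R'.getD j 0) = readVec ℓ z) ∧
      R.insertIdx i (R'.getD i 0) = readVec ℓ x) ∨
    (¬ (∃ z : List Bool, z.length = n ∧ R.insertIdx i (R'.getD i 0) = readVec ℓ z) ∧
      (∃ z : List Bool, z.length = n ∧ R.insertIdx (j + 1) (R'.getD j 0) = readVec ℓ z) ∧
      R.insertIdx (j + 1) (R'.getD j 0) = readVec ℓ x) := by
  classical
  subst hx
  obtain ⟨p, hp, rfl⟩ := hR
  obtain ⟨q, hq, rfl⟩ := hR'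
  have hl1 : 1 ≤ ℓ := by omega
  set TL := readVec ℓ x with hTL
  have hmlen : TL.length = x.length + ℓ - 1 := Recon.length_readVec ℓ x
  have hRk : ∀ k, (TL.eraseIdx p).getD k 0 =
      if k < p then TL.getD k 0 else TL.getD (k + 1) 0 := Recon.getD_eraseIdx TL p
  have hRk' : ∀ k, (TL.eraseIdx q).getD k 0 =
      if k < q then TL.getD k 0 else TL.getD (k + 1) 0 := Recon.getD_eraseIdx TL q
  have hRlen : (TL.eraseIdx p).length = TL.length - 1 := List.length_eraseIdx_of_lt hp
  have hbrx : ∀ k : ℕ, ((TL.getD k 0 : ℕ) : ℤ) = Recon.rv ℓ x k := Recon.readVec_getD ℓ hl1 x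
  rcases lt_trichotomy p q with hpq | hpq | hpq
  · -- p < q : the first candidate is the true read vector
    have hip : p ≤ i := by
      by_contra h
      push_neg at h
      exact hi.1 (by rw [hRk i, hRk' i, if_pos h, if_pos (h.trans hpq)])
    have hiq : i < q := by
      by_contra h
      push_neg at h
      exact hi.1 (by rw [hRk i, hRk' i, if_neg (by omega), if_neg (by omega)])
    have hjp : p ≤ j := by
      by_contra h
      push_neg at h
      exact hj.1 (by rw [hRk j, hRk' j, if_pos h, if_pos (h.trans hpq)])
    have hjq : j < q := by
      by_contra h
      push_neg at h
      exact hj.1 (by rw [hRk j, hRk' j, if_neg (by omega), if_neg (by omega)])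
    have hRi' : (TL.eraseIdx q).getD i 0 = TL.getD i 0 := by rw [hRk' i, if_pos hiq]
    have hRj' : (TL.eraseIdx q).getD j 0 = TL.getD j 0 := by rw [hRk' j, if_pos hjq]
    have hTj : TL.getD (j + 1) 0 ≠ TL.getD j 0 := by
      intro h
      apply hj.1
      rw [hRk j, hRk' j, if_neg (by omega), if_pos hjq, h]
    have hflat : ∀ k, p ≤ k → k < i → TL.getD (k + 1) 0 = TL.getD k 0 := by
      intro k h1 h2
      have h3 := hi.2 k h2
      rwa [hRk k, hRk' k, if_neg (by omega), if_pos (by omega)] at h3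
    have hileR : i ≤ (TL.eraseIdx p).length := by omega
    have hjleR : j + 1 ≤ (TL.eraseIdx p).length := by omega
    have hC1 : (TL.eraseIdx p).insertIdx i ((TL.eraseIdx q).getD i 0) = readVec ℓ x := by
      rw [hRi', ← hTL]
      apply Recon.eq_of_getD
      · rw [List.length_insertIdx, if_pos hileR, hRlen]; omega
      · intro k
        rw [Recon.getD_insertIdx _ _ _ hileR k]
        rcases lt_trichotomy k i with h | h | h
        · rw [if_pos h, hRk k]
          by_cases h2 : k < p
          · rw [if_pos h2]
          · rw [if_neg h2, hflat k (by omega) h]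
        · subst h; rw [if_neg (by omega), if_pos rfl]
        · rw [if_neg (by omega), if_neg (by omega), hRk (k - 1), if_neg (by omega)]
          have : k - 1 + 1 = k := by omega
          rw [this]
    refine Or.inl ⟨⟨x, rfl, hC1⟩, ?_, hC1⟩
    rintro ⟨z, hzlen, hzeq⟩
    rw [hRj'] at hzeq
    have hbrz : ∀ k : ℕ, ((((TL.eraseIdx p).insertIdx (j + 1) (TL.getD j 0)).getD k 0 : ℕ) : ℤ)
        = Recon.rv ℓ z k := by
      intro k
      rw [hzeq]
      exact Recon.readVec_getD ℓ hl1 z k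
    have hC2 : ∀ k : ℕ, ((TL.eraseIdx p).insertIdx (j + 1) (TL.getD j 0)).getD k 0 =
        if k < j + 1 then (TL.eraseIdx p).getD k 0
        else if k = j + 1 then TL.getD j 0 else (TL.eraseIdx p).getD (k - 1) 0 :=
      fun k => Recon.getD_insertIdx _ _ _ hjleR k
    refine Recon.lemB ℓ hℓ x z hzlen ((j : ℤ) + 1) ?_ ?_ ?_ ?_
    · have e : ((j : ℤ) + 1) - 1 = ((j : ℕ) : ℤ) := by ring
      rw [e, ← hbrz j, hC2 j, if_pos (by omega), hRk j, if_neg (by omega)]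
      have e2 : ((j : ℤ) + 1) = (((j + 1 : ℕ)) : ℤ) := by push_cast; ring
      rw [e2, ← hbrx (j + 1)]
    · have e2 : ((j : ℤ) + 1) = (((j + 1 : ℕ)) : ℤ) := by push_cast; ring
      have e : ((j : ℤ) + 1) - 1 = ((j : ℕ) : ℤ) := by ring
      rw [e, ← hbrx j, e2, ← hbrz (j + 1), hC2 (j + 1), if_neg (by omega), if_pos rfl]
    · have e2 : ((j : ℤ) + 1) = (((j + 1 : ℕ)) : ℤ) := by push_cast; ring
      have e : ((j : ℤ) + 1) - 1 = ((j : ℕ) : ℤ) := by ring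
      rw [e, e2, ← hbrx j, ← hbrx (j + 1)]
      intro h
      exact hTj (by exact_mod_cast h.symm)
    · intro k hk
      have hk0 : 0 ≤ k := by omega
      obtain ⟨k', rfl⟩ : ∃ k' : ℕ, ((k' : ℕ) : ℤ) = k := ⟨k.toNat, Int.toNat_of_nonneg hk0⟩
      have hk1 : j + 1 < k' := by exact_mod_cast hk
      rw [← hbrz k', ← hbrx k', hC2 k', if_neg (by omega), if_neg (by omega),
        hRk (k' - 1), if_neg (by omega)]
      have : k' - 1 + 1 = k' := by omega
      rw [this]
  · exact absurd (by rw [hpq]) hne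
  · -- q < p : the second candidate is the true read vector
    have hqi : q ≤ i := by
      by_contra h
      push_neg at h
      exact hi.1 (by rw [hRk i, hRk' i, if_pos (h.trans hpq), if_pos h])
    have hip : i < p := by
      by_contra h
      push_neg at h
      exact hi.1 (by rw [hRk i, hRk' i, if_neg (by omega), if_neg (by omega)])
    have hqj : q ≤ j := by
      by_contra h
      push_neg at h
      exact hj.1 (by rw [hRk j, hRk' j, if_pos (h.trans hpq), if_pos h])
    have hjp : j < p := by
      by_contra h
      push_neg at h
      exact hj.1 (by rw [hRk j, hRk' j, if_neg (by omega), if_neg (by omega)])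
    have hRi : (TL.eraseIdx p).getD i 0 = TL.getD i 0 := by rw [hRk i, if_pos hip]
    have hRi' : (TL.eraseIdx q).getD i 0 = TL.getD (i + 1) 0 := by
      rw [hRk' i, if_neg (by omega)]
    have hRj' : (TL.eraseIdx q).getD j 0 = TL.getD (j + 1) 0 := by
      rw [hRk' j, if_neg (by omega)]
    have hTi : TL.getD i 0 ≠ TL.getD (i + 1) 0 := by
      intro h
      apply hi.1
      rw [hRk i, hRk' i, if_pos hip, if_neg (by omega), h]
    have hflat : ∀ k, j < k → k < p → TL.getD k 0 = TL.getD (k + 1) 0 := by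
      intro k h1 h2
      have h3 := hj.2 k h1
      rwa [hRk k, hRk' k, if_pos h2, if_neg (by omega)] at h3
    have hileR : i ≤ (TL.eraseIdx p).length := by omega
    have hjleR : j + 1 ≤ (TL.eraseIdx p).length := by omega
    have hC2 : (TL.eraseIdx p).insertIdx (j + 1) ((TL.eraseIdx q).getD j 0) = readVec ℓ x := by
      rw [hRj', ← hTL]
      apply Recon.eq_of_getD
      · rw [List.length_insertIdx, if_pos hjleR, hRlen]; omega
      · intro k
        rw [Recon.getD_insertIdx _ _ _ hjleR k]
        rcases lt_trichotomy k (j + 1) with h | h | h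
        · rw [if_pos h, hRk k, if_pos (by omega)]
        · subst h; rw [if_neg (by omega), if_pos rfl]
        · rw [if_neg (by omega), if_neg (by omega), hRk (k - 1)]
          by_cases h2 : k - 1 < p
          · rw [if_pos h2, hflat (k - 1) (by omega) h2]
            have : k - 1 + 1 = k := by omega
            rw [this]
          · rw [if_neg h2]
            have : k - 1 + 1 = k := by omega
            rw [this]
    refine Or.inr ⟨?_, ⟨x, rfl, hC2⟩, hC2⟩
    rintro ⟨z, hzlen, hzeq⟩
    rw [hRi'] at hzeq
    have hbrz : ∀ k : ℕ, ((((TL.eraseIdx p).insertIdx i (TL.getD (i + 1) 0)).getD k 0 : ℕ) : ℤ)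
        = Recon.rv ℓ z k := by
      intro k
      rw [hzeq]
      exact Recon.readVec_getD ℓ hl1 z k
    have hC1 : ∀ k : ℕ, ((TL.eraseIdx p).insertIdx i (TL.getD (i + 1) 0)).getD k 0 =
        if k < i then (TL.eraseIdx p).getD k 0
        else if k = i then TL.getD (i + 1) 0 else (TL.eraseIdx p).getD (k - 1) 0 :=
      fun k => Recon.getD_insertIdx _ _ _ hileR k
    refine Recon.lemB' ℓ hℓ x z ((i : ℕ) : ℤ) ?_ ?_ ?_ ?_
    · have e2 : ((i : ℤ) + 1) = (((i + 1 : ℕ)) : ℤ) := by push_cast; ring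
      rw [e2, ← hbrz (i + 1), hC1 (i + 1), if_neg (by omega), if_neg (by omega)]
      have e3 : i + 1 - 1 = i := by omega
      rw [e3, hRk i, if_pos hip, ← hbrx i]
    · have e2 : ((i : ℤ) + 1) = (((i + 1 : ℕ)) : ℤ) := by push_cast; ring
      rw [← hbrz i, hC1 i, if_neg (by omega), if_pos rfl, e2, ← hbrx (i + 1)]
    · have e2 : ((i : ℤ) + 1) = (((i + 1 : ℕ)) : ℤ) := by push_cast; ring
      rw [e2, ← hbrx i, ← hbrx (i + 1)]
      intro h
      exact hTi (by exact_mod_cast h)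
    · intro k hk
      rcases lt_or_ge k 0 with hneg | hk0
      · rw [Recon.rv_neg ℓ z hneg, Recon.rv_neg ℓ x hneg]
      · obtain ⟨k', rfl⟩ : ∃ k' : ℕ, ((k' : ℕ) : ℤ) = k := ⟨k.toNat, Int.toNat_of_nonneg hk0⟩
        have hk1 : k' < i := by exact_mod_cast hk
        rw [← hbrz k', ← hbrx k', hC1 k', if_pos hk1, hRk k', if_pos (by omega)]
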